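/- Let $0 < p \leq 1$ and let $(X_0, X_1)$ be a $p$-convex quasi-Banach lattice couple. Then the sum of the $1/p$-convexifications satisfies $X_0^{(1/p)} + X_1^{(1/p)} = (X_0 + X_1)^{(1/p)}$ as sets, and for every $x$ in this space and all $t > 0$: $K(t, x; X_0^{(1/p)}, X_1^{(1/p)}) \leq 2^{1-p} K(t^{1/p}, x; X_0, X_1)^p$ and $K(t, x; X_0^{(1/p)}, X_1^{(1/p)}) \geq 2^{2p-2} \min_{i=0,1}(M^{(p)}(X_i))^{-p} K(t^{1/p}, x; X_0, X_1)^p$. -/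

import Mathlib

open ENNReal

noncomputable section

variable {α : Type*}

def IsLatticeQN (N : (α → ℝ) → ℝ≥0∞) (C : ℝ≥0∞) : Prop :=
  1 ≤ C ∧ C < ∞ ∧ N 0 = 0 ∧
    (∀ (c : ℝ) (f : α → ℝ), N (c • f) = ENNReal.ofReal |c| * N f) ∧
    (∀ f g : α → ℝ, N (f + g) ≤ C * (N f + N g)) ∧
    ∀ f g : α → ℝ, (∀ s, |f s| ≤ |g s|) → N f ≤ N g

def PConvex (N : (α → ℝ) → ℝ≥0∞) (p : ℝ) (M : ℝ≥0∞) : Prop :=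
  ∀ (n : ℕ) (x : Fin n → α → ℝ),
    N (fun s => (∑ k, |x k s| ^ p) ^ (1 / p)) ≤ M * (∑ k, (N (x k)) ^ p) ^ (1 / p)

/-- The Peetre K-functional of the couple `(X₀, X₁)`. -/
def Kfun (N0 N1 : (α → ℝ) → ℝ≥0∞) (t : ℝ) (x : α → ℝ) : ℝ≥0∞ :=
  ⨅ (y : (α → ℝ) × (α → ℝ)) (_ : x = y.1 + y.2), N0 y.1 + ENNReal.ofReal t * N1 y.2

/-- The K-functional of the couple of `1/p`-convexifications
`(X₀^{(1/p)}, X₁^{(1/p)})`: the quasi-norm of `X^{(1/p)}` is `‖·‖^p` and the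
addition is `x ⊕ y = (x^p + y^p)^{1/p}` (pointwise, over nonnegative
decompositions). -/
def Kconv (N0 N1 : (α → ℝ) → ℝ≥0∞) (p t : ℝ) (f : α → ℝ) : ℝ≥0∞ :=
  ⨅ (g : (α → ℝ) × (α → ℝ))
    (_ : ∀ s, 0 ≤ g.1 s ∧ 0 ≤ g.2 s ∧ |f s| = (g.1 s ^ p + g.2 s ^ p) ^ (1 / p)),
    N0 g.1 ^ p + ENNReal.ofReal t * N1 g.2 ^ p

private lemma myRpow_add_le_add_rpow {a b : ℝ} (ha : 0 ≤ a) (hb : 0 ≤ b) {q : ℝ}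
    (hq : 0 ≤ q) (hq1 : q ≤ 1) : (a + b) ^ q ≤ a ^ q + b ^ q := by
  have h := NNReal.rpow_add_le_add_rpow a.toNNReal b.toNNReal hq hq1
  have h2 := NNReal.coe_le_coe.2 h
  push_cast at h2
  rwa [Real.coe_toNNReal a ha, Real.coe_toNNReal b hb] at h2

private lemma myAdd_le_rpow {a b : ℝ} (ha : 0 ≤ a) (hb : 0 ≤ b) {q : ℝ}
    (hq0 : 0 < q) (hq1 : q ≤ 1) : a + b ≤ (a ^ q + b ^ q) ^ (1 / q) := by
  rw [one_div]
  calc a + b = ((a + b) ^ q) ^ q⁻¹ := (Real.rpow_rpow_inv (add_nonneg ha hb) hq0.ne').symm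
    _ ≤ (a ^ q + b ^ q) ^ q⁻¹ :=
      Real.rpow_le_rpow (Real.rpow_nonneg (add_nonneg ha hb) q)
        (myRpow_add_le_add_rpow ha hb hq0.le hq1) (by positivity)

private lemma myRpow_le_two_mul {a b : ℝ} (ha : 0 ≤ a) (hb : 0 ≤ b) {q : ℝ}
    (hq0 : 0 < q) (hq1 : q ≤ 1) :
    (a ^ q + b ^ q) ^ (1 / q) ≤ 2 ^ (1 / q - 1) * (a + b) := by
  have hq' : 1 ≤ 1 / q := by rw [le_div_iff₀ hq0]; linarith
  have h := NNReal.rpow_add_le_mul_rpow_add_rpow (a.toNNReal ^ q) (b.toNNReal ^ q) hq'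
  have hsa : (a.toNNReal ^ q) ^ (1 / q) = a.toNNReal := by
    rw [one_div, NNReal.rpow_rpow_inv hq0.ne']
  have hsb : (b.toNNReal ^ q) ^ (1 / q) = b.toNNReal := by
    rw [one_div, NNReal.rpow_rpow_inv hq0.ne']
  rw [hsa, hsb] at h
  have h2 := NNReal.coe_le_coe.2 h
  push_cast at h2
  rwa [Real.coe_toNNReal a ha, Real.coe_toNNReal b hb] at h2

private lemma myENN_add_rpow_le_two_mul {a b : ℝ≥0∞} {q : ℝ} (hq0 : 0 < q) (hq1 : q ≤ 1) :
    a ^ q + b ^ q ≤ ENNReal.ofReal (2 ^ (1 - q)) * (a + b) ^ q := by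
  have hq' : 1 ≤ 1 / q := by rw [le_div_iff₀ hq0]; linarith
  have h := ENNReal.rpow_add_le_mul_rpow_add_rpow (a ^ q) (b ^ q) hq'
  rw [one_div] at h
  rw [ENNReal.rpow_rpow_inv hq0.ne', ENNReal.rpow_rpow_inv hq0.ne'] at h
  have h2 := ENNReal.rpow_le_rpow h hq0.le
  rw [ENNReal.rpow_inv_rpow hq0.ne'] at h2
  rw [ENNReal.mul_rpow_of_nonneg _ _ hq0.le, ← ENNReal.rpow_mul] at h2
  have he : (q⁻¹ - 1) * q = 1 - q := by field_simp
  rw [he] at h2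
  rwa [show ((2:ℝ≥0∞) ^ (1 - q)) = ENNReal.ofReal (2 ^ (1-q)) by
    rw [← ENNReal.ofReal_rpow_of_pos two_pos]; norm_num] at h2

private lemma myIInf_rpow {ι : Sort*} (f : ι → ℝ≥0∞) {q : ℝ} (hq : 0 < q) :
    (⨅ i, f i) ^ q = ⨅ i, f i ^ q := by
  have := OrderIso.map_iInf (ENNReal.orderIsoRpow q hq) f
  simp only [ENNReal.orderIsoRpow_apply] at this
  exact this

/-- From a sum decomposition produce a convexified decomposition. -/
private lemma exists_conv_decomp {p : ℝ} (hp0 : 0 < p) (hp1 : p ≤ 1)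
    (f f0 f1 : α → ℝ) (hf : f = f0 + f1) :
    ∃ g h : α → ℝ, (∀ s, 0 ≤ g s ∧ 0 ≤ h s ∧ |f s| = (g s ^ p + h s ^ p) ^ (1 / p)) ∧
      (∀ s, |g s| ≤ |f0 s|) ∧ (∀ s, |h s| ≤ |f1 s|) := by
  set D : α → ℝ := fun s => (|f0 s| ^ p + |f1 s| ^ p) ^ (1 / p) with hD
  refine ⟨fun s => if D s = 0 then 0 else |f s| * |f0 s| / D s,
          fun s => if D s = 0 then 0 else |f s| * |f1 s| / D s, ?_, ?_, ?_⟩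
  · intro s
    have hfs : f s = f0 s + f1 s := by rw [hf]; rfl
    have hDnn : 0 ≤ D s := Real.rpow_nonneg (by positivity) _
    have hfle : |f s| ≤ D s := by
      calc |f s| ≤ |f0 s| + |f1 s| := by rw [hfs]; exact abs_add_le _ _
        _ ≤ D s := myAdd_le_rpow (abs_nonneg _) (abs_nonneg _) hp0 hp1
    by_cases hD0 : D s = 0
    · have hf0 : |f s| = 0 := le_antisymm (hD0 ▸ hfle) (abs_nonneg _)
      simp only [if_pos hD0, hf0]
      exact ⟨le_rfl, le_rfl, by rw [Real.zero_rpow hp0.ne', zero_add,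
        Real.zero_rpow (by positivity : (1:ℝ)/p ≠ 0)]⟩
    · have hDpos : 0 < D s := lt_of_le_of_ne hDnn (Ne.symm hD0)
      simp only [if_neg hD0]
      refine ⟨by positivity, by positivity, ?_⟩
      have hDp : D s ^ p = |f0 s| ^ p + |f1 s| ^ p := by
        rw [hD, one_div, Real.rpow_inv_rpow (by positivity) hp0.ne']
      have hXpos : 0 < |f0 s| ^ p + |f1 s| ^ p :=
        hDp ▸ Real.rpow_pos_of_pos hDpos p
      have hg : (|f s| * |f0 s| / D s) ^ p = |f s| ^ p * |f0 s| ^ p / D s ^ p := by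
        rw [Real.div_rpow (by positivity) hDnn, Real.mul_rpow (abs_nonneg _) (abs_nonneg _)]
      have hh : (|f s| * |f1 s| / D s) ^ p = |f s| ^ p * |f1 s| ^ p / D s ^ p := by
        rw [Real.div_rpow (by positivity) hDnn, Real.mul_rpow (abs_nonneg _) (abs_nonneg _)]
      rw [hg, hh, hDp, ← add_div, ← mul_add, mul_div_assoc,
        div_self hXpos.ne', mul_one, one_div, Real.rpow_rpow_inv (abs_nonneg _) hp0.ne']
  · intro s
    by_cases hD0 : D s = 0
    · simp [hD0]
    · have hDnn : 0 ≤ D s := Real.rpow_nonneg (by positivity) _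
      have hDpos : 0 < D s := lt_of_le_of_ne hDnn (Ne.symm hD0)
      have hfs : f s = f0 s + f1 s := by rw [hf]; rfl
      have hfle : |f s| ≤ D s := by
        calc |f s| ≤ |f0 s| + |f1 s| := by rw [hfs]; exact abs_add_le _ _
          _ ≤ D s := myAdd_le_rpow (abs_nonneg _) (abs_nonneg _) hp0 hp1
      simp only [if_neg hD0]
      rw [abs_of_nonneg (by positivity), div_le_iff₀ hDpos]
      calc |f s| * |f0 s| ≤ D s * |f0 s| := mul_le_mul_of_nonneg_right hfle (abs_nonneg _)
        _ = |f0 s| * D s := mul_comm _ _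
  · intro s
    by_cases hD0 : D s = 0
    · simp [hD0]
    · have hDnn : 0 ≤ D s := Real.rpow_nonneg (by positivity) _
      have hDpos : 0 < D s := lt_of_le_of_ne hDnn (Ne.symm hD0)
      have hfs : f s = f0 s + f1 s := by rw [hf]; rfl
      have hfle : |f s| ≤ D s := by
        calc |f s| ≤ |f0 s| + |f1 s| := by rw [hfs]; exact abs_add_le _ _
          _ ≤ D s := myAdd_le_rpow (abs_nonneg _) (abs_nonneg _) hp0 hp1
      simp only [if_neg hD0]
      rw [abs_of_nonneg (by positivity), div_le_iff₀ hDpos]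
      calc |f s| * |f1 s| ≤ D s * |f1 s| := mul_le_mul_of_nonneg_right hfle (abs_nonneg _)
        _ = |f1 s| * D s := mul_comm _ _

/-- From a convexified decomposition produce a sum decomposition. -/
private lemma exists_sum_decomp {p : ℝ} (hp0 : 0 < p) (hp1 : p ≤ 1)
    (f g h : α → ℝ)
    (hgh : ∀ s, 0 ≤ g s ∧ 0 ≤ h s ∧ |f s| = (g s ^ p + h s ^ p) ^ (1 / p)) :
    ∃ f0 f1 : α → ℝ, f = f0 + f1 ∧
      (∀ s, |f0 s| ≤ |(2 : ℝ) ^ (1 / p - 1) * g s|) ∧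
      (∀ s, |f1 s| ≤ |(2 : ℝ) ^ (1 / p - 1) * h s|) := by
  set S : α → ℝ := fun s => g s + h s with hS
  refine ⟨fun s => if S s = 0 then 0 else f s * g s / S s,
          fun s => if S s = 0 then 0 else f s * h s / S s, ?_, ?_, ?_⟩
  · funext s
    obtain ⟨hg, hh, hfs⟩ := hgh s
    by_cases hS0 : S s = 0
    · have hg0 : g s = 0 := le_antisymm (by rw [hS] at hS0; simp at hS0; linarith) hg
      have hh0 : h s = 0 := le_antisymm (by rw [hS] at hS0; simp at hS0; linarith) hh
      have : |f s| = 0 := by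
        rw [hfs, hg0, hh0, Real.zero_rpow hp0.ne', zero_add,
          Real.zero_rpow (by positivity : (1:ℝ)/p ≠ 0)]
      have hf0 : f s = 0 := abs_eq_zero.mp this
      simp [Pi.add_apply, if_pos hS0, hf0]
    · have hSpos : 0 < S s := lt_of_le_of_ne (by positivity) (Ne.symm hS0)
      simp only [Pi.add_apply, if_neg hS0]
      field_simp
      ring
  · intro s
    obtain ⟨hg, hh, hfs⟩ := hgh s
    by_cases hS0 : S s = 0
    · simp [if_pos hS0]; positivity
    · have hSpos : 0 < S s := lt_of_le_of_ne (by positivity) (Ne.symm hS0)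
      simp only [if_neg hS0]
      rw [abs_div, abs_mul, abs_of_nonneg hg, abs_of_nonneg hSpos.le,
        abs_mul, abs_of_nonneg (by positivity : (0:ℝ) ≤ (2:ℝ) ^ (1/p - 1)),
        abs_of_nonneg hg, div_le_iff₀ hSpos]
      have hfle : |f s| ≤ 2 ^ (1 / p - 1) * S s := by
        rw [hfs]; exact myRpow_le_two_mul hg hh hp0 hp1
      calc |f s| * g s ≤ (2 ^ (1 / p - 1) * S s) * g s :=
            mul_le_mul_of_nonneg_right hfle hg
        _ = 2 ^ (1 / p - 1) * g s * S s := by ring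
  · intro s
    obtain ⟨hg, hh, hfs⟩ := hgh s
    by_cases hS0 : S s = 0
    · simp [if_pos hS0]; positivity
    · have hSpos : 0 < S s := lt_of_le_of_ne (by positivity) (Ne.symm hS0)
      simp only [if_neg hS0]
      rw [abs_div, abs_mul, abs_of_nonneg hh, abs_of_nonneg hSpos.le,
        abs_mul, abs_of_nonneg (by positivity : (0:ℝ) ≤ (2:ℝ) ^ (1/p - 1)),
        abs_of_nonneg hh, div_le_iff₀ hSpos]
      have hfle : |f s| ≤ 2 ^ (1 / p - 1) * S s := by
        rw [hfs]; exact myRpow_le_two_mul hg hh hp0 hp1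
      calc |f s| * h s ≤ (2 ^ (1 / p - 1) * S s) * h s :=
            mul_le_mul_of_nonneg_right hfle hh
        _ = 2 ^ (1 / p - 1) * h s * S s := by ring

/-- Monotonicity with a scaling factor. -/
private lemma myN_scaled {N : (α → ℝ) → ℝ≥0∞} {C : ℝ≥0∞} (hN : IsLatticeQN N C)
    {u v : α → ℝ} {c : ℝ} (hc : 0 ≤ c) (huv : ∀ s, |u s| ≤ |c * v s|) :
    N u ≤ ENNReal.ofReal c * N v := by
  have h1 : N u ≤ N (c • v) := by
    refine hN.2.2.2.2.2 u (c • v) ?_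
    intro s
    simpa [Pi.smul_apply, smul_eq_mul] using huv s
  rw [hN.2.2.2.1] at h1
  rwa [abs_of_nonneg hc] at h1

theorem K_functional_convexification (N0 N1 : (α → ℝ) → ℝ≥0∞)
    (C0 C1 M0 M1 : ℝ≥0∞) (p : ℝ) (hp0 : 0 < p) (hp1 : p ≤ 1)
    (h0 : IsLatticeQN N0 C0) (h1 : IsLatticeQN N1 C1)
    (hM0 : 1 ≤ M0 ∧ M0 < ∞) (hM1 : 1 ≤ M1 ∧ M1 < ∞)
    (hc0 : PConvex N0 p M0) (hc1 : PConvex N1 p M1) :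
    ({f : α → ℝ | ∃ g h : α → ℝ,
        (∀ s, 0 ≤ g s ∧ 0 ≤ h s ∧ |f s| = (g s ^ p + h s ^ p) ^ (1 / p)) ∧
        N0 g < ∞ ∧ N1 h < ∞} =
      {f : α → ℝ | ∃ g h : α → ℝ, f = g + h ∧ N0 g < ∞ ∧ N1 h < ∞}) ∧
    ∀ (f : α → ℝ) (t : ℝ), 0 < t →
      (Kconv N0 N1 p t f ≤
        ENNReal.ofReal (2 ^ (1 - p)) * Kfun N0 N1 (t ^ (1 / p)) f ^ p ∧
      ENNReal.ofReal (2 ^ (2 * p - 2)) * min (M0 ^ p)⁻¹ (M1 ^ p)⁻¹ *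
          Kfun N0 N1 (t ^ (1 / p)) f ^ p ≤ Kconv N0 N1 p t f) := by
  have hmono0 := h0.2.2.2.2.2
  have hmono1 := h1.2.2.2.2.2
  constructor
  · -- set equality
    ext f
    simp only [Set.mem_setOf_eq]
    constructor
    · rintro ⟨g, h, hgh, hNg, hNh⟩
      obtain ⟨f0, f1, hf, hb0, hb1⟩ := exists_sum_decomp hp0 hp1 f g h hgh
      refine ⟨f0, f1, hf, ?_, ?_⟩
      · exact lt_of_le_of_lt (myN_scaled h0 (by positivity) hb0)
          (ENNReal.mul_lt_top ENNReal.ofReal_lt_top hNg)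
      · exact lt_of_le_of_lt (myN_scaled h1 (by positivity) hb1)
          (ENNReal.mul_lt_top ENNReal.ofReal_lt_top hNh)
    · rintro ⟨f0, f1, hf, hN0f, hN1f⟩
      obtain ⟨g, h, hgh, hb0, hb1⟩ := exists_conv_decomp hp0 hp1 f f0 f1 hf
      exact ⟨g, h, hgh, lt_of_le_of_lt (hmono0 g f0 hb0) hN0f,
        lt_of_le_of_lt (hmono1 h f1 hb1) hN1f⟩
  · intro f t ht
    have hT : (ENNReal.ofReal (t ^ (1 / p))) ^ p = ENNReal.ofReal t := by
      rw [ENNReal.ofReal_rpow_of_pos (Real.rpow_pos_of_pos ht _), one_div,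
        Real.rpow_inv_rpow ht.le hp0.ne']
    constructor
    · -- upper bound
      set c : ℝ≥0∞ := ENNReal.ofReal (2 ^ (1 - p)) with hc
      have hcne0 : c ≠ 0 := by
        rw [hc]; simp [ENNReal.ofReal_eq_zero]; positivity
      have hcnetop : c ≠ ∞ := ENNReal.ofReal_ne_top
      have key : ∀ y : (α → ℝ) × (α → ℝ), f = y.1 + y.2 →
          Kconv N0 N1 p t f ≤
            c * (N0 y.1 + ENNReal.ofReal (t ^ (1 / p)) * N1 y.2) ^ p := by
        intro y hy
        obtain ⟨g, h, hgh, hb0, hb1⟩ := exists_conv_decomp hp0 hp1 f y.1 y.2 hy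
        have hle : Kconv N0 N1 p t f ≤ N0 g ^ p + ENNReal.ofReal t * N1 h ^ p := by
          rw [Kconv]
          exact iInf₂_le (g, h) hgh
        calc Kconv N0 N1 p t f ≤ N0 g ^ p + ENNReal.ofReal t * N1 h ^ p := hle
          _ ≤ N0 y.1 ^ p + ENNReal.ofReal t * N1 y.2 ^ p := by
              exact add_le_add (ENNReal.rpow_le_rpow (hmono0 g y.1 hb0) hp0.le)
                (mul_le_mul' le_rfl (ENNReal.rpow_le_rpow (hmono1 h y.2 hb1) hp0.le))
          _ = N0 y.1 ^ p + (ENNReal.ofReal (t ^ (1 / p)) * N1 y.2) ^ p := by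
              rw [ENNReal.mul_rpow_of_nonneg _ _ hp0.le, hT]
          _ ≤ c * (N0 y.1 + ENNReal.ofReal (t ^ (1 / p)) * N1 y.2) ^ p :=
              myENN_add_rpow_le_two_mul hp0 hp1
      have hrw : c * Kfun N0 N1 (t ^ (1 / p)) f ^ p =
          ⨅ (y : (α → ℝ) × (α → ℝ)) (_ : f = y.1 + y.2),
            c * (N0 y.1 + ENNReal.ofReal (t ^ (1 / p)) * N1 y.2) ^ p := by
        rw [Kfun, myIInf_rpow _ hp0, ENNReal.mul_iInf_of_ne hcne0 hcnetop]
        refine iInf_congr fun y => ?_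
        rw [myIInf_rpow _ hp0, ENNReal.mul_iInf_of_ne hcne0 hcnetop]
      rw [hrw]
      exact le_iInf fun y => le_iInf fun hy => key y hy
    · -- lower bound
      rw [Kconv]
      refine le_iInf fun gh => le_iInf fun hgh => ?_
      obtain ⟨f0, f1, hf, hb0, hb1⟩ := exists_sum_decomp hp0 hp1 f gh.1 gh.2 hgh
      set T : ℝ := t ^ (1 / p) with hTdef
      have hK1 : Kfun N0 N1 T f ≤
          ENNReal.ofReal (2 ^ (1 / p - 1)) * (N0 gh.1 + ENNReal.ofReal T * N1 gh.2) := by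
        have hstep : Kfun N0 N1 T f ≤ N0 f0 + ENNReal.ofReal T * N1 f1 := by
          rw [Kfun]
          exact iInf₂_le (f0, f1) hf
        calc Kfun N0 N1 T f ≤ N0 f0 + ENNReal.ofReal T * N1 f1 := hstep
          _ ≤ ENNReal.ofReal (2 ^ (1 / p - 1)) * N0 gh.1 +
              ENNReal.ofReal T * (ENNReal.ofReal (2 ^ (1 / p - 1)) * N1 gh.2) :=
            add_le_add (myN_scaled h0 (by positivity) hb0)
              (mul_le_mul' le_rfl (myN_scaled h1 (by positivity) hb1))
          _ = ENNReal.ofReal (2 ^ (1 / p - 1)) * (N0 gh.1 + ENNReal.ofReal T * N1 gh.2) := by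
            ring
      have hcp : (ENNReal.ofReal ((2:ℝ) ^ (1 / p - 1))) ^ p = ENNReal.ofReal (2 ^ (1 - p)) := by
        rw [ENNReal.ofReal_rpow_of_pos (by positivity)]
        congr 1
        rw [← Real.rpow_mul (by norm_num : (0:ℝ) ≤ 2)]
        congr 1
        field_simp
      have hK2 : Kfun N0 N1 T f ^ p ≤
          ENNReal.ofReal (2 ^ (1 - p)) * (N0 gh.1 ^ p + ENNReal.ofReal t * N1 gh.2 ^ p) := by
        calc Kfun N0 N1 T f ^ p
            ≤ (ENNReal.ofReal (2 ^ (1 / p - 1)) * (N0 gh.1 + ENNReal.ofReal T * N1 gh.2)) ^ p :=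
              ENNReal.rpow_le_rpow hK1 hp0.le
          _ = (ENNReal.ofReal (2 ^ (1 / p - 1))) ^ p * (N0 gh.1 + ENNReal.ofReal T * N1 gh.2) ^ p := by
              rw [ENNReal.mul_rpow_of_nonneg _ _ hp0.le]
          _ ≤ (ENNReal.ofReal (2 ^ (1 / p - 1))) ^ p *
              (N0 gh.1 ^ p + (ENNReal.ofReal T * N1 gh.2) ^ p) :=
              mul_le_mul' le_rfl (ENNReal.rpow_add_le_add_rpow _ _ hp0.le hp1)
          _ = ENNReal.ofReal (2 ^ (1 - p)) * (N0 gh.1 ^ p + ENNReal.ofReal t * N1 gh.2 ^ p) := by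
              rw [hcp, ENNReal.mul_rpow_of_nonneg _ _ hp0.le, hT]
      have hmin : min (M0 ^ p)⁻¹ (M1 ^ p)⁻¹ ≤ 1 := by
        refine le_trans (min_le_left _ _) (ENNReal.inv_le_one.2 ?_)
        calc (1:ℝ≥0∞) = 1 ^ p := (ENNReal.one_rpow p).symm
          _ ≤ M0 ^ p := ENNReal.rpow_le_rpow hM0.1 hp0.le
      calc ENNReal.ofReal (2 ^ (2 * p - 2)) * min (M0 ^ p)⁻¹ (M1 ^ p)⁻¹ *
            Kfun N0 N1 T f ^ p
          ≤ ENNReal.ofReal (2 ^ (2 * p - 2)) * 1 *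
            (ENNReal.ofReal (2 ^ (1 - p)) * (N0 gh.1 ^ p + ENNReal.ofReal t * N1 gh.2 ^ p)) :=
            mul_le_mul' (mul_le_mul' le_rfl hmin) hK2
        _ = (ENNReal.ofReal (2 ^ (2 * p - 2)) * ENNReal.ofReal (2 ^ (1 - p))) *
            (N0 gh.1 ^ p + ENNReal.ofReal t * N1 gh.2 ^ p) := by ring
        _ = ENNReal.ofReal (2 ^ (p - 1)) *
            (N0 gh.1 ^ p + ENNReal.ofReal t * N1 gh.2 ^ p) := by
            rw [← ENNReal.ofReal_mul (by positivity), ← Real.rpow_add two_pos,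
              show 2 * p - 2 + (1 - p) = p - 1 by ring]
        _ ≤ 1 * (N0 gh.1 ^ p + ENNReal.ofReal t * N1 gh.2 ^ p) := by
            refine mul_le_mul' (ENNReal.ofReal_le_one.2 ?_) le_rfl
            exact Real.rpow_le_one_of_one_le_of_nonpos one_le_two (by linarith)
        _ = N0 gh.1 ^ p + ENNReal.ofReal t * N1 gh.2 ^ p := one_mul _

end
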